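/- Let w_1, …, w_n > 0 with Σ_i w_i = 1, and let M be the move-ahead-1 (MA1) transition matrix on permutations of {1,…,n}: M(x,y) = w_{x_r} if y is obtained from x by transposing the entries in positions r−1 and r for some 2 ≤ r ≤ n; M(x,x) = w_{x_1}; and M(x,y) = 0 otherwise. Let π(x) := z^{−1} ∏_{i=1}^n w_{x_i}^{n−i}, where z is the normalizing constant making Σ_x π(x) = 1. Then π(x)·M(x,y) = π(y)·M(y,x) for all permutations x and y; that is, M is reversible with respect to π, and hence π is a stationary distribution of M. -/

import Mathlib

open Finset

/-- The Hendricks stationary weight `∏_{i=1}^n w_{x_i}^{n-i}` (0-based exponent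
`n - 1 - i`), where `x i` is the entry in position `i`. -/
noncomputable def wProd (n : ℕ) (w : Fin n → ℝ) (x : Equiv.Perm (Fin n)) : ℝ :=
  ∏ i : Fin n, w (x i) ^ (n - 1 - (i : ℕ))

/-- The move-ahead-1 (MA1) transition matrix: `M(x,y) = w_{x_r}` if `y` is obtained
from `x` by transposing the entries in (0-based) positions `r-1` and `r` for some
`1 ≤ r ≤ n-1`; `M(x,x) = w_{x_1}` (the front record); `M(x,y) = 0` otherwise. -/
noncomputable def MA1 (n : ℕ) (hn : 0 < n) (w : Fin n → ℝ) :
    Matrix (Equiv.Perm (Fin n)) (Equiv.Perm (Fin n)) ℝ :=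
  Matrix.of fun x y =>
    if x = y then w (x ⟨0, hn⟩)
    else
      ∑ r : Fin n,
        if 1 ≤ (r : ℕ) ∧
            y = x *
              Equiv.swap (⟨(r : ℕ) - 1, Nat.lt_of_le_of_lt (Nat.sub_le _ _) r.isLt⟩ : Fin n) r
        then w (x r)
        else 0

lemma MA1_key (n : ℕ) (hn : 0 < n) (w : Fin n → ℝ) (x y : Equiv.Perm (Fin n)) :
    wProd n w x * MA1 n hn w x y = wProd n w y * MA1 n hn w y x := by
  rcases eq_or_ne x y with rfl | hxy
  · rfl
  · simp only [MA1, Matrix.of_apply, if_neg hxy, if_neg hxy.symm]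
    rw [Finset.mul_sum, Finset.mul_sum]
    refine Finset.sum_congr rfl fun r _ => ?_
    set r' : Fin n := ⟨(r : ℕ) - 1, Nat.lt_of_le_of_lt (Nat.sub_le _ _) r.isLt⟩ with hr'
    by_cases hc : 1 ≤ (r : ℕ) ∧ y = x * Equiv.swap r' r
    · obtain ⟨h1, hy⟩ := hc
      have hrr' : r' ≠ r := by
        refine Fin.ne_of_val_ne ?_
        simp only [hr']
        omega
      have hx : x = y * Equiv.swap r' r := by
        rw [hy, mul_assoc, Equiv.swap_mul_self, mul_one]
      rw [if_pos ⟨h1, hy⟩, if_pos ⟨h1, hx⟩]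
      have hyr' : y r' = x r := by
        rw [hy]; simp [Equiv.Perm.mul_apply, Equiv.swap_apply_left]
      have hyr : y r = x r' := by
        rw [hy]; simp [Equiv.Perm.mul_apply, Equiv.swap_apply_right]
      set f : Fin n → ℝ := fun i => w (x i) ^ (n - 1 - (i : ℕ)) with hf
      set g : Fin n → ℝ := fun i => w (y i) ^ (n - 1 - (i : ℕ)) with hg
      have hmem : r ∈ (univ : Finset (Fin n)).erase r' := by
        simp [hrr'.symm]
      have hxp : wProd n w x = f r' * (f r * ∏ i ∈ (univ.erase r').erase r, f i) := by
        rw [wProd, ← Finset.mul_prod_erase univ f (mem_univ r'),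
          ← Finset.mul_prod_erase _ f hmem]
      have hyp : wProd n w y = g r' * (g r * ∏ i ∈ (univ.erase r').erase r, g i) := by
        rw [wProd, ← Finset.mul_prod_erase univ g (mem_univ r'),
          ← Finset.mul_prod_erase _ g hmem]
      have hP : ∏ i ∈ (univ.erase r').erase r, g i = ∏ i ∈ (univ.erase r').erase r, f i := by
        refine Finset.prod_congr rfl fun i hi => ?_
        simp only [Finset.mem_erase, Finset.mem_univ] at hi
        have : y i = x i := by
          rw [hy]
          simp [Equiv.Perm.mul_apply, Equiv.swap_apply_of_ne_of_ne hi.2.1 hi.1]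
        simp [hg, hf, this]
      have he : n - 1 - ((r' : ℕ)) = (n - 1 - (r : ℕ)) + 1 := by
        have := r.isLt
        simp only [hr']
        omega
      have hgr' : g r' = w (x r) ^ ((n - 1 - (r : ℕ)) + 1) := by
        simp [hg, hyr', he]
      have hgr : g r = w (x r') ^ (n - 1 - (r : ℕ)) := by
        simp [hg, hyr]
      have hfr' : f r' = w (x r') ^ ((n - 1 - (r : ℕ)) + 1) := by
        simp [hf, he]
      rw [hxp, hyp, hP, hgr', hgr, hfr', hyr]
      show w (x r') ^ _ * (f r * _) * w (x r) = _
      rw [hf]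
      ring
    · rw [if_neg hc, if_neg, mul_zero, mul_zero]
      rintro ⟨h1, hx⟩
      exact hc ⟨h1, by rw [hx, mul_assoc, Equiv.swap_mul_self, mul_one]⟩

lemma MA1_rowsum (n : ℕ) (hn : 0 < n) (w : Fin n → ℝ)
    (hsum : ∑ i : Fin n, w i = 1) (y : Equiv.Perm (Fin n)) :
    ∑ x : Equiv.Perm (Fin n), MA1 n hn w y x = 1 := by
  set b : Fin n := ⟨0, hn⟩ with hb
  rw [← Finset.add_sum_erase univ _ (mem_univ y)]
  have h1 : MA1 n hn w y y = w (y b) := by simp [MA1, hb]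
  have h2 : ∑ x ∈ univ.erase y, MA1 n hn w y x
      = ∑ r : Fin n, (if 1 ≤ (r : ℕ) then w (y r) else 0) := by
    have : ∀ x ∈ univ.erase y, MA1 n hn w y x
        = ∑ r : Fin n,
          if 1 ≤ (r : ℕ) ∧
              x = y * Equiv.swap
                (⟨(r : ℕ) - 1, Nat.lt_of_le_of_lt (Nat.sub_le _ _) r.isLt⟩ : Fin n) r
          then w (y r) else 0 := by
      intro x hx
      simp only [Finset.mem_erase] at hx
      simp [MA1, (Ne.symm hx.1)]
    rw [Finset.sum_congr rfl this, Finset.sum_comm]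
    refine Finset.sum_congr rfl fun r _ => ?_
    set r' : Fin n := ⟨(r : ℕ) - 1, Nat.lt_of_le_of_lt (Nat.sub_le _ _) r.isLt⟩ with hr'
    by_cases hc : 1 ≤ (r : ℕ)
    · have hrr' : r' ≠ r := by
        refine Fin.ne_of_val_ne ?_
        simp only [hr']
        omega
      have hcmem : y * Equiv.swap r' r ∈ univ.erase y := by
        simp only [Finset.mem_erase, Finset.mem_univ, and_true]
        intro h
        have h1' : Equiv.swap r' r = 1 := by
          have := congrArg (fun z => y⁻¹ * z) h
          simpa [mul_assoc] using this
        have : r = r' := by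
          simpa [Equiv.swap_apply_left] using congrArg (fun e => e r') h1'
        exact hrr' this.symm
      rw [if_pos hc]
      have : ∀ x ∈ univ.erase y,
          (if 1 ≤ (r : ℕ) ∧ x = y * Equiv.swap r' r then w (y r) else 0)
          = if x = y * Equiv.swap r' r then w (y r) else 0 := fun x _ => by simp [hc]
      rw [Finset.sum_congr rfl this, Finset.sum_ite_eq' _ _ (fun _ => w (y r)), if_pos hcmem]
    · rw [if_neg hc]
      refine Finset.sum_eq_zero fun x _ => ?_
      rw [if_neg (fun h => hc h.1)]
  rw [h1, h2]
  have h3 : ∑ r : Fin n, (if 1 ≤ (r : ℕ) then w (y r) else 0)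
      = ∑ r ∈ univ.erase b, w (y r) := by
    rw [← Finset.add_sum_erase univ _ (mem_univ b)]
    have : (if 1 ≤ ((b : Fin n) : ℕ) then w (y b) else 0) = 0 := by simp [hb]
    rw [this, zero_add]
    refine Finset.sum_congr rfl fun r hr => ?_
    simp only [Finset.mem_erase] at hr
    have : 1 ≤ (r : ℕ) := by
      rcases Nat.eq_zero_or_pos (r : ℕ) with h | h
      · exact absurd (Fin.ext (by simp [hb, h])) hr.1
      · exact h
    rw [if_pos this]
  have h4 : ∑ r : Fin n, w (y r) = w (y b) + ∑ r ∈ univ.erase b, w (y r) :=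
    (Finset.add_sum_erase univ (fun r => w (y r)) (mem_univ b)).symm
  rw [h3, ← h4, Equiv.sum_comp y w]
  exact hsum

/-- the MA1 chain is reversible with respect to the Hendricks distribution
`π(x) ∝ ∏_i w_{x_i}^{n-i}`, and hence `π` is a stationary distribution of `M`. -/
theorem MA1_reversible (n : ℕ) (hn : 2 ≤ n) (w : Fin n → ℝ)
    (hw : ∀ i, 0 < w i) (hsum : ∑ i : Fin n, w i = 1) :
    (∀ x y : Equiv.Perm (Fin n),
      ((∑ z : Equiv.Perm (Fin n), wProd n w z)⁻¹ * wProd n w x) *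
          MA1 n (by omega) w x y =
        ((∑ z : Equiv.Perm (Fin n), wProd n w z)⁻¹ * wProd n w y) *
          MA1 n (by omega) w y x) ∧
    (∀ y : Equiv.Perm (Fin n),
      ∑ x : Equiv.Perm (Fin n),
          ((∑ z : Equiv.Perm (Fin n), wProd n w z)⁻¹ * wProd n w x) *
            MA1 n (by omega) w x y =
        (∑ z : Equiv.Perm (Fin n), wProd n w z)⁻¹ * wProd n w y) := by
  have hn0 : 0 < n := by omega
  constructor
  · intro x y
    rw [mul_assoc, mul_assoc, MA1_key n hn0 w x y]
  · intro y
    have : ∀ x : Equiv.Perm (Fin n),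
        ((∑ z : Equiv.Perm (Fin n), wProd n w z)⁻¹ * wProd n w x) * MA1 n hn0 w x y
        = (∑ z : Equiv.Perm (Fin n), wProd n w z)⁻¹ * (wProd n w y * MA1 n hn0 w y x) := by
      intro x
      rw [mul_assoc, MA1_key n hn0 w x y]
    rw [Finset.sum_congr rfl (fun x _ => this x), ← Finset.mul_sum, ← Finset.mul_sum,
      MA1_rowsum n hn0 w hsum y, mul_one]
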